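/- Let K be a compact metric space and F ∈ B_{1/4}(K), i.e. F is a uniform limit of functions Gₙ with sup_n |Gₙ|_D < ∞. Then there exists M < ∞ such that for every finite sequence of positive reals (δᵢ)ᵢ₌₁ⁿ with K_n(F,(δᵢ)) ≠ ∅ one has Σᵢ₌₁ⁿ δᵢ ≤ M. -/

import Mathlib

open Filter

/-- The oscillation of `F` restricted to `L` at `x` is at least `δ`. -/
def oscGE {K : Type*} [TopologicalSpace K] (F : K → ℝ) (L : Set K) (x : K) (δ : ℝ) : Prop :=
  ∀ U ∈ nhds x, ∀ η < δ, ∃ y ∈ L ∩ U, ∃ z ∈ L ∩ U, η < F y - F z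

/-- Derived sets with varying thresholds. -/
def oscDerivedSetSeq {K : Type*} [TopologicalSpace K] (F : K → ℝ) (δ : ℕ → ℝ) : ℕ → Set K
  | 0 => Set.univ
  | n + 1 => {x ∈ oscDerivedSetSeq F δ n | oscGE F (oscDerivedSetSeq F δ n) x (δ (n + 1))}

/-- `G` has DBSC norm at most `C`: some sequence of continuous functions starting at `0`
converges pointwise to `G` with variation sums uniformly bounded by `C`. -/
def DBSCNormLE {K : Type*} [TopologicalSpace K] (G : K → ℝ) (C : ℝ) : Prop :=
  ∃ f : ℕ → K → ℝ, (∀ n, Continuous (f n)) ∧ f 0 = 0 ∧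
    (∀ k, Tendsto (fun n => f n k) atTop (nhds (G k))) ∧
    ∀ (k : K) (N : ℕ), ∑ n ∈ Finset.range N, |f (n+1) k - f n k| ≤ C

theorem aux_chain {K : Type*} [MetricSpace K] (F G : K → ℝ) (C εm ε : ℝ) (hε : 0 < ε)
    (hG : DBSCNormLE G C) (hFG : ∀ k, |F k - G k| ≤ εm)
    (δ : ℕ → ℝ) (n : ℕ) (x : K) (hx : x ∈ oscDerivedSetSeq F δ n) :
    ∑ i ∈ Finset.range n, δ (i+1) ≤ 2*C + 2*n*(εm + ε) := by
  obtain ⟨f, hcont, hf0, hlim, hbd⟩ := hG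
  set p : ℕ → K → ℝ := fun N k => ∑ m ∈ Finset.range N, |f (m+1) k - f m k| with hp
  have hpcont : ∀ N, Continuous (p N) := by
    intro N
    exact continuous_finset_sum _ (fun m _ => ((hcont (m+1)).sub (hcont m)).abs)
  have hpbdd : ∀ k, BddAbove (Set.range (fun N => p N k)) := by
    intro k; exact ⟨C, by rintro _ ⟨N, rfl⟩; exact hbd k N⟩
  set s : K → ℝ := fun k => ⨆ N, p N k with hs
  have hpmono : ∀ k, Monotone (fun N => p N k) := by
    intro k a b hab
    exact Finset.sum_le_sum_of_subset_of_nonneg (Finset.range_subset_range.2 hab)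
      (fun m _ _ => abs_nonneg _)
  have hps : ∀ k, Tendsto (fun N => p N k) atTop (nhds (s k)) := fun k =>
    tendsto_atTop_ciSup (hpmono k) (hpbdd k)
  have hsC : ∀ k, s k ≤ C := fun k => ciSup_le (fun N => hbd k N)
  have hs0 : ∀ k, 0 ≤ s k := by
    intro k
    have h := le_ciSup (hpbdd k) 0
    simpa [hp] using h
  have hplus_mono : ∀ k, Monotone (fun N => p N k + f N k) := by
    intro k
    apply monotone_nat_of_le_succ
    intro N
    have h1 : p (N+1) k = p N k + |f (N+1) k - f N k| := Finset.sum_range_succ _ N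
    have h2 : -(f (N+1) k - f N k) ≤ |f (N+1) k - f N k| := neg_le_abs _
    show p N k + f N k ≤ p (N+1) k + f (N+1) k
    linarith
  have hminus_mono : ∀ k, Monotone (fun N => p N k - f N k) := by
    intro k
    apply monotone_nat_of_le_succ
    intro N
    have h1 : p (N+1) k = p N k + |f (N+1) k - f N k| := Finset.sum_range_succ _ N
    have h2 : (f (N+1) k - f N k) ≤ |f (N+1) k - f N k| := le_abs_self _
    show p N k - f N k ≤ p (N+1) k - f (N+1) k
    linarith
  have hplus_lim : ∀ k, Tendsto (fun N => p N k + f N k) atTop (nhds (s k + G k)) :=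
    fun k => (hps k).add (hlim k)
  have hminus_lim : ∀ k, Tendsto (fun N => p N k - f N k) atTop (nhds (s k - G k)) :=
    fun k => (hps k).sub (hlim k)
  have hplus_le : ∀ N k, p N k + f N k ≤ s k + G k := fun N k =>
    Monotone.ge_of_tendsto (hplus_mono k) (hplus_lim k) N
  have hminus_le : ∀ N k, p N k - f N k ≤ s k - G k := fun N k =>
    Monotone.ge_of_tendsto (hminus_mono k) (hminus_lim k) N
  -- semicontinuity of s+G and s-G
  have hsemi : ∀ (x₀ : K) (ε' : ℝ), 0 < ε' → ∃ U ∈ nhds x₀, ∀ w ∈ U,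
      s x₀ + G x₀ - ε' < s w + G w ∧ s x₀ - G x₀ - ε' < s w - G w := by
    intro x₀ ε' hε'
    obtain ⟨N₁, hN₁⟩ := ((hplus_lim x₀).eventually
      (eventually_gt_nhds (by linarith : s x₀ + G x₀ - ε' < s x₀ + G x₀))).exists
    obtain ⟨N₂, hN₂⟩ := ((hminus_lim x₀).eventually
      (eventually_gt_nhds (by linarith : s x₀ - G x₀ - ε' < s x₀ - G x₀))).exists
    have c₁ : Continuous (fun w => p N₁ w + f N₁ w) := (hpcont N₁).add (hcont N₁)
    have c₂ : Continuous (fun w => p N₂ w - f N₂ w) := (hpcont N₂).sub (hcont N₂)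
    have e₁ : ∀ᶠ w in nhds x₀, s x₀ + G x₀ - ε' < p N₁ w + f N₁ w :=
      c₁.continuousAt.eventually (eventually_gt_nhds hN₁)
    have e₂ : ∀ᶠ w in nhds x₀, s x₀ - G x₀ - ε' < p N₂ w - f N₂ w :=
      c₂.continuousAt.eventually (eventually_gt_nhds hN₂)
    refine ⟨_, (e₁.and e₂), ?_⟩
    rintro w ⟨hw₁, hw₂⟩
    exact ⟨lt_of_lt_of_le hw₁ (hplus_le N₁ w), lt_of_lt_of_le hw₂ (hminus_le N₂ w)⟩
  -- single step
  have hstep : ∀ (L : Set K) (x₀ : K) (d : ℝ), oscGE F L x₀ d →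
      ∃ w ∈ L, s x₀ + d/2 - εm - ε ≤ s w := by
    intro L x₀ d hosc
    obtain ⟨U, hU, hUprop⟩ := hsemi x₀ (ε/2) (by linarith)
    obtain ⟨y, ⟨hyL, hyU⟩, z, ⟨hzL, hzU⟩, hyz⟩ := hosc U hU (d - ε/2) (by linarith)
    have hy := hUprop y hyU
    have hz := hUprop z hzU
    have hGy := abs_le.1 (hFG y)
    have hGz := abs_le.1 (hFG z)
    have hGyz : d - ε/2 - 2*εm < G y - G z := by
      have := hGy.1; have := hGy.2; have := hGz.1; have := hGz.2; linarith
    rcases le_or_gt (s y + G y) (s x₀ + G x₀ + d - ε - 2*εm) with h | h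
    · -- then s z - G z is large
      refine ⟨z, hzL, ?_⟩
      have key : s x₀ - G x₀ + d - ε - 2*εm < s z - G z := by
        have h1 := hy.2  -- s x₀ - G x₀ - ε/2 < s y - G y
        have h2 := hz.1  -- s x₀ + G x₀ - ε/2 < s z + G z
        nlinarith [h1, h2, hGyz, h]
      have h2 := hz.1
      linarith
    · refine ⟨y, hyL, ?_⟩
      have h1 := hy.2
      linarith
  -- chain induction
  have hchain : ∀ (N : ℕ) (y : K), y ∈ oscDerivedSetSeq F δ N →
      ∃ w : K, s y + (∑ i ∈ Finset.range N, δ (i+1))/2 - N*(εm + ε) ≤ s w := by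
    intro N
    induction N with
    | zero => intro y _; exact ⟨y, by simp⟩
    | succ N ih =>
      intro y hy
      obtain ⟨hyN, hosc⟩ := hy
      obtain ⟨w, hwL, hw⟩ := hstep _ y (δ (N+1)) hosc
      obtain ⟨w', hw'⟩ := ih w hwL
      refine ⟨w', ?_⟩
      rw [Finset.sum_range_succ]
      push_cast
      linarith
  obtain ⟨w, hw⟩ := hchain n x hx
  have h1 := hsC w
  have h2 := hs0 x
  linarith

/-- If `F` is a uniform limit of functions `Gₘ` with `sup_m |Gₘ|_D < ∞`
(i.e. `F ∈ B_{1/4}(K)`), then there exists `M < ∞` such that whenever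
`K_n(F,(δᵢ)) ≠ ∅` for positive reals `δ₁,…,δₙ`, one has `Σᵢ₌₁ⁿ δᵢ ≤ M`. -/
theorem stmt8 {K : Type*} [MetricSpace K] [CompactSpace K] (F : K → ℝ)
    (hF : ∃ (C : ℝ) (G : ℕ → K → ℝ), (∀ m, DBSCNormLE (G m) C) ∧
      TendstoUniformly G F atTop) :
    ∃ M : ℝ, ∀ (n : ℕ) (δ : ℕ → ℝ), (∀ i, 0 < δ i) →
      (oscDerivedSetSeq F δ n).Nonempty → ∑ i ∈ Finset.range n, δ (i + 1) ≤ M := by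
  obtain ⟨C, G, hGC, hunif⟩ := hF
  refine ⟨2*C, ?_⟩
  rintro n δ hδ ⟨x, hx⟩
  refine le_of_forall_pos_le_add ?_
  intro ε hε
  have hden : (0:ℝ) < 4*((n:ℝ)+1) := by positivity
  set ε' : ℝ := ε / (4*((n:ℝ)+1)) with hε'def
  have hε' : 0 < ε' := by positivity
  obtain ⟨m, hm⟩ := (Metric.tendstoUniformly_iff.1 hunif ε' hε').exists
  have hFG : ∀ k, |F k - G m k| ≤ ε' := by
    intro k
    have h := hm k
    rw [Real.dist_eq] at h
    exact le_of_lt h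
  have hmain := aux_chain F (G m) C ε' ε' hε' (hGC m) hFG δ n x hx
  have hkey : ε' * (4*((n:ℝ)+1)) = ε := by
    rw [hε'def]; field_simp
  have hn : (0:ℝ) ≤ (n:ℝ) := Nat.cast_nonneg n
  nlinarith [hmain, hkey, hε', hn]
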